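/- Let A be a semisimple finite-dimensional ℤ₂-graded complex algebra with essential grading (each simple component of type M(n,m) has n,m > 0). Then the functor V₀ ↦ A ⊗_{A₀} V₀, from the category of (ungraded) A₀-modules to the category of graded A-modules, is an isomorphism of categories, with inverse the restriction functor V ↦ V₀. -/

import Mathlib

/-- A bundled `ℤ₂`-graded module over a `ℤ₂`-graded `ℂ`-algebra `A`:
a `ℂ`-vector space with an `A`-action and a distinguished pair of subspaces
(the even and odd parts). -/
structure GModuleBundle (A : Type*) [Ring A] [Algebra ℂ A] where
  carrier : Type
  [acg : AddCommGroup carrier]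
  [modC : Module ℂ carrier]
  [modA : Module A carrier]
  [tower : IsScalarTower ℂ A carrier]
  even : Submodule ℂ carrier
  odd : Submodule ℂ carrier

attribute [instance] GModuleBundle.acg GModuleBundle.modC GModuleBundle.modA
  GModuleBundle.tower

variable {A : Type*} [Ring A] [Algebra ℂ A]

/-- `V` is a graded `A`-module: `V = V₀ ⊕ V₁` and `Aᵢ • Vⱼ ⊆ V_{i+j}`. -/
def GModuleBundle.IsGraded (A₀ : Subalgebra ℂ A) (A₁ : Submodule ℂ A)
    (V : GModuleBundle A) : Prop :=
  IsCompl V.even V.odd ∧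
  (∀ a ∈ A₀, ∀ v ∈ V.even, a • v ∈ V.even) ∧
  (∀ a ∈ A₀, ∀ v ∈ V.odd, a • v ∈ V.odd) ∧
  (∀ a ∈ A₁, ∀ v ∈ V.even, a • v ∈ V.odd) ∧
  (∀ a ∈ A₁, ∀ v ∈ V.odd, a • v ∈ V.even)

/-- `V` is a simple (irreducible) graded `A`-module: it is nonzero and has no
nonzero proper `A`-stable graded subspace. -/
def GModuleBundle.IsSimple (V : GModuleBundle A) : Prop :=
  Nontrivial V.carrier ∧
  ∀ U : Submodule ℂ V.carrier, (∀ a : A, ∀ v ∈ U, a • v ∈ U) →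
    (∀ u ∈ U, ∃ u₀ ∈ U, u₀ ∈ V.even ∧ ∃ u₁ ∈ U, u₁ ∈ V.odd ∧ u = u₀ + u₁) →
    U = ⊥ ∨ U = ⊤


lemma aux_subsingleton (hss : IsSemisimpleRing A)
    (A₀ : Subalgebra ℂ A) (A₁ : Submodule ℂ A)
    (hess : ∀ V : GModuleBundle A, V.IsGraded A₀ A₁ → V.IsSimple →
      V.even ≠ ⊥ ∧ V.odd ≠ ⊥)
    (M : Type) [AddCommGroup M] [Module ℂ M] [Module A M] [IsScalarTower ℂ A M]
    (hz : ∀ a ∈ A₁, ∀ m : M, a • m = 0) : Subsingleton M := by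
  by_contra h
  haveI : Nontrivial M := not_subsingleton_iff_nontrivial.mp h
  haveI := hss
  obtain ⟨S, hS⟩ := IsSemisimpleModule.exists_simple_submodule A M
  haveI := hS
  let V : GModuleBundle A :=
    { carrier := S, even := ⊥, odd := ⊤ }
  have hzS : ∀ a ∈ A₁, ∀ s : S, a • s = 0 := by
    intro a ha s
    apply Subtype.ext
    simpa using hz a ha (s : M)
  have hgr : V.IsGraded A₀ A₁ := by
    refine ⟨isCompl_bot_top, ?_, ?_, ?_, ?_⟩
    · intro a _ v hv; change v ∈ (⊥ : Submodule ℂ S) at hv; change a • v ∈ (⊥ : Submodule ℂ S); rw [Submodule.mem_bot] at hv ⊢; rw [hv, smul_zero]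
    · intro a _ v _; trivial
    · intro a _ v _; trivial
    · intro a ha v _
      change a • v ∈ (⊥ : Submodule ℂ S)
      simp only [Submodule.mem_bot]
      exact hzS a ha v
  have hsim : V.IsSimple := by
    refine ⟨IsSimpleModule.nontrivial A S, ?_⟩
    intro U hU _
    let U' : Submodule A S :=
      { carrier := (U : Set S)
        add_mem' := fun ha hb => U.add_mem ha hb
        zero_mem' := U.zero_mem
        smul_mem' := fun a v hv => hU a v hv }
    have hmem : ∀ x : S, x ∈ U ↔ x ∈ U' := fun _ => Iff.rfl
    rcases eq_bot_or_eq_top U' with h' | h'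
    · left; ext x; rw [hmem]; rw [h']; simp
    · right; ext x; rw [hmem]; rw [h']; simp
  have := (hess V hgr hsim).1
  exact this rfl

lemma aux_span (hss : IsSemisimpleRing A)
    (A₀ : Subalgebra ℂ A) (A₁ : Submodule ℂ A)
    (hcompl : IsCompl A₀.toSubmodule A₁)
    (hess : ∀ V : GModuleBundle A, V.IsGraded A₀ A₁ → V.IsSimple →
      V.even ≠ ⊥ ∧ V.odd ≠ ⊥)
    (V : GModuleBundle A) (hV : V.IsGraded A₀ A₁) :
    Submodule.span A (V.even : Set V.carrier) = ⊤ := by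
  set N := Submodule.span A (V.even : Set V.carrier) with hN
  have hz : ∀ a ∈ A₁, ∀ m : V.carrier ⧸ N, a • m = 0 := by
    intro a ha m
    obtain ⟨v, rfl⟩ := Submodule.Quotient.mk_surjective N m
    have hv : v ∈ V.even ⊔ V.odd := by rw [hV.1.codisjoint.eq_top]; trivial
    obtain ⟨v₀, hv₀, v₁, hv₁, rfl⟩ := Submodule.mem_sup.mp hv
    have h1 : a • (v₀ + v₁) ∈ N := by
      rw [smul_add]
      exact N.add_mem (N.smul_mem a (Submodule.subset_span hv₀))
        (Submodule.subset_span (hV.2.2.2.2 a ha v₁ hv₁))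
    rw [← Submodule.Quotient.mk_smul, Submodule.Quotient.mk_eq_zero]
    exact h1
  have hsub : Subsingleton (V.carrier ⧸ N) :=
    aux_subsingleton hss A₀ A₁ hess _ hz
  exact Submodule.Quotient.subsingleton_iff.mp hsub

lemma partA (hss : IsSemisimpleRing A)
    (A₀ : Subalgebra ℂ A) (A₁ : Submodule ℂ A)
    (hcompl : IsCompl A₀.toSubmodule A₁)
    (h01 : ∀ a ∈ A₀, ∀ b ∈ A₁, a * b ∈ A₁)
    (h11 : ∀ a ∈ A₁, ∀ b ∈ A₁, a * b ∈ A₀)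
    (hess : ∀ V : GModuleBundle A, V.IsGraded A₀ A₁ → V.IsSimple →
      V.even ≠ ⊥ ∧ V.odd ≠ ⊥)
    (V W : GModuleBundle A) (hV : V.IsGraded A₀ A₁) (hW : W.IsGraded A₀ A₁)
    (g : ↥V.even →ₗ[ℂ] ↥W.even)
    (hg : ∀ (a : ↥A₀) (v v' : ↥V.even), (v' : V.carrier) = (a : A) • (v : V.carrier) →
      (g v' : W.carrier) = (a : A) • (g v : W.carrier)) :
    ∃! f : V.carrier →ₗ[A] W.carrier,
      (∀ v ∈ V.even, f v ∈ W.even) ∧ (∀ v ∈ V.odd, f v ∈ W.odd) ∧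
      (∀ v : ↥V.even, f (v : V.carrier) = (g v : W.carrier)) := by
  classical
  set Γ₀ : Submodule ℂ (V.carrier × W.carrier) :=
    LinearMap.range ((V.even.subtype).prod (W.even.subtype.comp g)) with hΓ₀def
  have hΓ₀mem : ∀ x, x ∈ Γ₀ ↔ ∃ v : ↥V.even,
      ((v : V.carrier), (g v : W.carrier)) = x := by
    intro x
    exact ⟨fun ⟨v, h⟩ => ⟨v, h⟩, fun ⟨v, h⟩ => ⟨v, h⟩⟩
  set Γ₁ : Submodule ℂ (V.carrier × W.carrier) :=
    Submodule.span ℂ {x | ∃ a ∈ A₁, ∃ p ∈ Γ₀, x = a • p} with hΓ₁def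
  set Γ : Submodule A (V.carrier × W.carrier) :=
    Submodule.span A (Γ₀ : Set (V.carrier × W.carrier)) with hΓdef
  have hΓ₀even : Γ₀ ≤ V.even.prod W.even := by
    rintro x hx
    obtain ⟨v, rfl⟩ := (hΓ₀mem x).mp hx
    exact ⟨v.2, (g v).2⟩
  have hA₀Γ₀ : ∀ a ∈ A₀, ∀ p ∈ Γ₀, a • p ∈ Γ₀ := by
    intro a ha p hp
    obtain ⟨v, rfl⟩ := (hΓ₀mem p).mp hp
    refine (hΓ₀mem _).mpr ⟨⟨a • (v : V.carrier), hV.2.1 a ha _ v.2⟩, ?_⟩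
    have := hg ⟨a, ha⟩ v ⟨a • (v : V.carrier), hV.2.1 a ha _ v.2⟩ rfl
    simp [Prod.ext_iff, this, Prod.smul_def]
  have hA₁Γ₀ : ∀ a ∈ A₁, ∀ p ∈ Γ₀, a • p ∈ Γ₁ := by
    intro a ha p hp
    exact Submodule.subset_span ⟨a, ha, p, hp, rfl⟩
  have hΓ₁odd : Γ₁ ≤ V.odd.prod W.odd := by
    rw [hΓ₁def, Submodule.span_le]
    rintro x ⟨a, ha, p, hp, rfl⟩
    obtain ⟨v, rfl⟩ := (hΓ₀mem p).mp hp
    exact ⟨hV.2.2.2.1 a ha _ v.2, hW.2.2.2.1 a ha _ (g v).2⟩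
  have hA₀Γ₁ : ∀ a ∈ A₀, ∀ x ∈ Γ₁, a • x ∈ Γ₁ := by
    intro a ha x hx
    rw [hΓ₁def] at hx
    induction hx using Submodule.span_induction with
    | mem y hy =>
      obtain ⟨b, hb, p, hp, rfl⟩ := hy
      rw [smul_smul]
      exact Submodule.subset_span ⟨a * b, h01 a ha b hb, p, hp, rfl⟩
    | zero => simpa using Γ₁.zero_mem
    | add y z _ _ hy hz => rw [smul_add]; exact Γ₁.add_mem hy hz
    | smul c y _ hy => rw [smul_comm]; exact Γ₁.smul_mem c hy
  have hA₁Γ₁ : ∀ a ∈ A₁, ∀ x ∈ Γ₁, a • x ∈ Γ₀ := by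
    intro a ha x hx
    rw [hΓ₁def] at hx
    induction hx using Submodule.span_induction with
    | mem y hy =>
      obtain ⟨b, hb, p, hp, rfl⟩ := hy
      rw [smul_smul]
      exact hA₀Γ₀ (a * b) (h11 a ha b hb) p hp
    | zero => simpa using Γ₀.zero_mem
    | add y z _ _ hy hz => rw [smul_add]; exact Γ₀.add_mem hy hz
    | smul c y _ hy => rw [smul_comm]; exact Γ₀.smul_mem c hy
  -- Γ as a set equals Γ₀ ⊔ Γ₁
  have hstab : ∀ a : A, ∀ x ∈ (Γ₀ ⊔ Γ₁ : Submodule ℂ (V.carrier × W.carrier)),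
      a • x ∈ (Γ₀ ⊔ Γ₁ : Submodule ℂ (V.carrier × W.carrier)) := by
    intro a x hx
    obtain ⟨p, hp, q, hq, rfl⟩ := Submodule.mem_sup.mp hx
    have haa : a ∈ A₀.toSubmodule ⊔ A₁ := by rw [hcompl.codisjoint.eq_top]; trivial
    obtain ⟨a₀, ha₀, a₁, ha₁, rfl⟩ := Submodule.mem_sup.mp haa
    have e1 : (a₀ + a₁) • (p + q) =
        (a₀ • p + a₁ • q) + (a₁ • p + a₀ • q) := by
      rw [add_smul, smul_add, smul_add]; abel
    rw [e1]
    exact Submodule.add_mem _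
      (Submodule.mem_sup_left
        (Γ₀.add_mem (hA₀Γ₀ a₀ ha₀ p hp) (hA₁Γ₁ a₁ ha₁ q hq)))
      (Submodule.mem_sup_right
        (Γ₁.add_mem (hA₁Γ₀ a₁ ha₁ p hp) (hA₀Γ₁ a₀ ha₀ q hq)))
  have hΓ₁sub : ∀ q ∈ Γ₁, q ∈ Γ := by
    intro q hq
    rw [hΓ₁def] at hq
    induction hq using Submodule.span_induction with
    | mem y hy =>
      obtain ⟨b, hb, r, hr, rfl⟩ := hy
      exact Γ.smul_mem b (Submodule.subset_span hr)
    | zero => exact Γ.zero_mem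
    | add y z _ _ hy hz => exact Γ.add_mem hy hz
    | smul c y _ hy =>
      rw [← algebraMap_smul A c y]
      exact Γ.smul_mem _ hy
  have hΓmem : ∀ x, x ∈ Γ ↔ x ∈ (Γ₀ ⊔ Γ₁ : Submodule ℂ (V.carrier × W.carrier)) := by
    intro x
    constructor
    · intro hx
      rw [hΓdef] at hx
      induction hx using Submodule.span_induction with
      | mem y hy => exact Submodule.mem_sup_left hy
      | zero => exact Submodule.zero_mem _
      | add y z _ _ hy hz => exact Submodule.add_mem _ hy hz
      | smul a y _ hy => exact hstab a y hy
    · intro hx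
      obtain ⟨p, hp, q, hq, rfl⟩ := Submodule.mem_sup.mp hx
      exact Γ.add_mem (Submodule.subset_span hp) (hΓ₁sub q hq)
  have hdec : ∀ x ∈ Γ, ∃ v : ↥V.even, ∃ q ∈ Γ₁,
      x = ((v : V.carrier), (g v : W.carrier)) + q := by
    intro x hx
    obtain ⟨p, hp, q, hq, rfl⟩ := Submodule.mem_sup.mp ((hΓmem x).mp hx)
    obtain ⟨v, rfl⟩ := (hΓ₀mem p).mp hp
    exact ⟨v, q, hq, rfl⟩
  -- elements of Γ over 0 are zero
  have hΓ₁K : ∀ w : W.carrier, ((0 : V.carrier), w) ∈ Γ → ((0 : V.carrier), w) ∈ Γ₁ := by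
    intro w hw
    obtain ⟨v, q, hq, hx⟩ := hdec _ hw
    have hq1 : q.1 ∈ V.odd := (hΓ₁odd hq).1
    have hv0 : (v : V.carrier) = 0 := by
      have h1 : (0 : V.carrier) = (v : V.carrier) + q.1 := congrArg Prod.fst hx
      have : (v : V.carrier) = -q.1 := eq_neg_of_add_eq_zero_left h1.symm
      exact (Submodule.disjoint_def.mp hV.1.disjoint _ v.2
        (this ▸ V.odd.neg_mem hq1))
    have hv : v = 0 := Subtype.ext hv0
    rw [hx, hv]
    simpa [Prod.mk_zero_zero] using hq
  have hK : ∀ w : W.carrier, ((0 : V.carrier), w) ∈ Γ → w = 0 := by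
    set K : Submodule A W.carrier := Γ.comap (LinearMap.inr A V.carrier W.carrier)
      with hKdef
    have hKz : ∀ a ∈ A₁, ∀ w ∈ K, a • w = 0 := by
      intro a ha w hw
      have h1 : ((0 : V.carrier), w) ∈ Γ := hw
      have h2 := hA₁Γ₁ a ha _ (hΓ₁K w h1)
      have h3 : ((0 : V.carrier), a • w) ∈ Γ₀ := by
        simpa [Prod.smul_def] using h2
      obtain ⟨v, hv⟩ := (hΓ₀mem _).mp h3
      have hv1 : (v : V.carrier) = 0 := congrArg Prod.fst hv
      have hv0 : v = 0 := Subtype.ext hv1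
      have := congrArg Prod.snd hv
      simp only at this
      rw [← this, hv0]
      simp
    have hsub : Subsingleton ↥K := by
      refine aux_subsingleton hss A₀ A₁ hess ↥K ?_
      intro a ha m
      apply Subtype.ext
      have : (((a • m) : ↥K) : W.carrier) = a • (m : W.carrier) := rfl
      rw [this, hKz a ha _ m.2]
      rfl
    intro w hw
    have : (⟨w, hw⟩ : ↥K) = ⟨0, K.zero_mem⟩ := Subsingleton.elim _ _
    exact congrArg Subtype.val this
  have huniq : ∀ (v : V.carrier) (w w' : W.carrier),
      (v, w) ∈ Γ → (v, w') ∈ Γ → w = w' := by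
    intro v w w' h1 h2
    have h3 : ((0 : V.carrier), w - w') ∈ Γ := by
      have := Γ.sub_mem h1 h2
      simpa [Prod.mk_sub_mk] using this
    have := hK _ h3
    exact sub_eq_zero.mp this
  have hproj : ∀ v : V.carrier, ∃ w, (v, w) ∈ Γ := by
    have hP : Γ.map (LinearMap.fst A V.carrier W.carrier) = ⊤ := by
      rw [eq_top_iff, ← aux_span hss A₀ A₁ hcompl hess V hV, Submodule.span_le]
      intro v hv
      exact ⟨Prod.mk ((⟨v, hv⟩ : ↥V.even) : V.carrier) ((g ⟨v, hv⟩ : ↥W.even) : W.carrier),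
        Submodule.subset_span ((hΓ₀mem _).mpr ⟨⟨v, hv⟩, rfl⟩), rfl⟩
    intro v
    have : v ∈ Γ.map (LinearMap.fst A V.carrier W.carrier) := by rw [hP]; trivial
    obtain ⟨x, hx, hx1⟩ := this
    refine ⟨x.2, ?_⟩
    have hxx : (v, x.2) = x := by
      obtain ⟨x1, x2⟩ := x
      simp only [LinearMap.fst_apply] at hx1
      rw [hx1]
    rwa [hxx]
  choose F hF using hproj
  let f : V.carrier →ₗ[A] W.carrier :=
    { toFun := F
      map_add' := fun x y => by
        refine huniq (x + y) _ _ (hF _) ?_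
        have := Γ.add_mem (hF x) (hF y)
        simpa [Prod.mk_add_mk] using this
      map_smul' := fun a x => by
        refine huniq (a • x) _ _ (hF _) ?_
        have := Γ.smul_mem a (hF x)
        simpa [Prod.smul_def] using this }
  have hfeven : ∀ v : ↥V.even, f (v : V.carrier) = (g v : W.carrier) := by
    intro v
    exact huniq _ _ _ (hF _)
      (Submodule.subset_span ((hΓ₀mem _).mpr ⟨v, rfl⟩))
  refine ⟨f, ⟨?_, ?_, hfeven⟩, ?_⟩
  · intro v hv
    have h := hfeven ⟨v, hv⟩
    rw [show f v = ((g ⟨v, hv⟩ : ↥W.even) : W.carrier) from h]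
    exact (g ⟨v, hv⟩).2
  · intro v hv
    obtain ⟨v₀, q, hq, hx⟩ := hdec _ (hF v)
    have hq1 : q.1 ∈ V.odd := (hΓ₁odd hq).1
    have hv₀0 : (v₀ : V.carrier) = 0 := by
      have h1 : v = (v₀ : V.carrier) + q.1 := congrArg Prod.fst hx
      have : (v₀ : V.carrier) = v - q.1 := eq_sub_of_add_eq h1.symm
      exact (Submodule.disjoint_def.mp hV.1.disjoint _ v₀.2
        (this ▸ V.odd.sub_mem hv hq1))
    have h2 : F v = (g v₀ : W.carrier) + q.2 := congrArg Prod.snd hx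
    have h3 : v₀ = 0 := Subtype.ext hv₀0
    have : F v = q.2 := by rw [h2, h3]; simp
    show F v ∈ W.odd
    rw [this]
    exact (hΓ₁odd hq).2
  · intro f' hf'
    have hker : Submodule.span A (V.even : Set V.carrier) ≤ LinearMap.ker (f' - f) := by
      rw [Submodule.span_le]
      intro v hv
      have h1 : f' v = (g ⟨v, hv⟩ : W.carrier) := hf'.2.2 ⟨v, hv⟩
      have h2 : f v = (g ⟨v, hv⟩ : W.carrier) := hfeven ⟨v, hv⟩
      simp [LinearMap.mem_ker, h1, h2]
    rw [aux_span hss A₀ A₁ hcompl hess V hV, top_le_iff, LinearMap.ker_eq_top] at hker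
    exact sub_eq_zero.mp hker

set_option maxHeartbeats 1000000 in
lemma partB [FiniteDimensional ℂ A]
    (A₀ : Subalgebra ℂ A) (A₁ : Submodule ℂ A)
    (hcompl : IsCompl A₀.toSubmodule A₁)
    (h01 : ∀ a ∈ A₀, ∀ b ∈ A₁, a * b ∈ A₁)
    (h10 : ∀ a ∈ A₁, ∀ b ∈ A₀, a * b ∈ A₁)
    (h11 : ∀ a ∈ A₁, ∀ b ∈ A₁, a * b ∈ A₀)
    (U : Type) [AddCommGroup U] [Module ℂ U] [Module ↥A₀ U] [IsScalarTower ℂ ↥A₀ U] :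
    ∃ V : GModuleBundle A, V.IsGraded A₀ A₁ ∧
      ∃ e : ↥V.even ≃ₗ[ℂ] U,
        ∀ (a : ↥A₀) (v v' : ↥V.even), (v' : V.carrier) = (a : A) • (v : V.carrier) →
          e v' = a • e v := by
  classical
  -- the projection onto A₀ along A₁
  set π : A →ₗ[ℂ] A :=
    A₀.toSubmodule.subtype.comp (A₀.toSubmodule.projectionOnto A₁ hcompl) with hπdef
  have hπ0 : ∀ a : A, π a ∈ A₀ := fun a => (A₀.toSubmodule.projectionOnto A₁ hcompl a).2
  have hπ1 : ∀ a : A, a - π a ∈ A₁ := by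
    intro a
    have h := Submodule.projection_add_projection_eq_self hcompl a
    have h2 : a - π a = ((A₁.projectionOnto A₀.toSubmodule hcompl.symm) a : A) := by
      have h3 := eq_sub_of_add_eq' h
      change a - π a = A₁.projection A₀.toSubmodule hcompl.symm a
      rw [h3]
      rfl
    rw [h2]
    exact ((A₁.projectionOnto A₀.toSubmodule hcompl.symm) a).2
  have hπA₀ : ∀ a ∈ A₀, π a = a := by
    intro a ha
    rw [hπdef]
    simp only [LinearMap.comp_apply, Submodule.subtype_apply]
    rw [Submodule.projectionOnto_apply_left hcompl ⟨a, ha⟩]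
  have hπA₁ : ∀ b ∈ A₁, π b = 0 := by
    intro b hb
    rw [hπdef]
    simp only [LinearMap.comp_apply, Submodule.subtype_apply]
    rw [Submodule.projectionOnto_apply_right hcompl ⟨b, hb⟩]
    rfl
  have hπlin : ∀ (s : ↥A₀) (b : A), π ((s : A) * b) = (s : A) * π b := by
    intro s b
    have hd : π ((s : A) * b) - (s : A) * π b ∈ A₀.toSubmodule :=
      A₀.toSubmodule.sub_mem (hπ0 _) (A₀.mul_mem s.2 (hπ0 b))
    have hd' : π ((s : A) * b) - (s : A) * π b ∈ A₁ := by
      have h1 : (s : A) * b - (s : A) * π b ∈ A₁ := by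
        rw [← mul_sub]
        exact h01 _ s.2 _ (hπ1 b)
      have h2 : (s : A) * b - π ((s : A) * b) ∈ A₁ := hπ1 _
      have h3 : π ((s : A) * b) - (s : A) * π b =
          ((s : A) * b - (s : A) * π b) - ((s : A) * b - π ((s : A) * b)) := by abel
      rw [h3]
      exact A₁.sub_mem h1 h2
    exact sub_eq_zero.mp (Submodule.disjoint_def.mp hcompl.disjoint _ hd hd')
  -- right multiplication as an A₀-linear map
  let rmul : A → (A →ₗ[↥A₀] A) := fun a =>
    { toFun := fun b => b * a
      map_add' := fun b b' => add_mul b b' a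
      map_smul' := fun s b => by
        show ((s : A) * b) * a = (s : A) * (b * a)
        rw [mul_assoc] }
  -- the coinduced module X = Hom_{A₀}(A, U)
  haveI : Small.{0} A := small_of_injective (Module.finBasis ℂ A).equivFun.injective
  set X := (A →ₗ[↥A₀] U) with hXdef
  haveI hsmallX : Small.{0} X :=
    small_of_injective (f := fun (f : X) => (f : A → U)) DFunLike.coe_injective
  letI smulAX : SMul A X := ⟨fun a f => f.comp (rmul a)⟩
  have hsmul : ∀ (a : A) (f : X) (b : A), (a • f) b = f (b * a) := fun _ _ _ => rfl
  letI modAX : Module A X :=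
    { smul := (· • ·)
      one_smul := fun f => by ext b; show f (b * 1) = f b; rw [mul_one]
      mul_smul := fun a a' f => by
        ext b; show f (b * (a * a')) = f ((b * a) * a'); rw [mul_assoc]
      smul_zero := fun a => by ext b; show (0 : U) = 0; rfl
      smul_add := fun a f f' => by
        ext b; show (f + f') (b * a) = f (b * a) + f' (b * a); rfl
      add_smul := fun a a' f => by
        ext b
        show f (b * (a + a')) = f (b * a) + f (b * a')
        rw [mul_add, map_add]
      zero_smul := fun f => by
        ext b; show f (b * 0) = 0; rw [mul_zero, map_zero] }
  letI towerX : IsScalarTower ℂ A X := by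
    constructor
    intro c a f
    ext b
    show f (b * (c • a)) = (c • (a • f)) b
    calc f (b * (c • a)) = f (c • (b * a)) := by rw [mul_smul_comm]
      _ = f ((algebraMap ℂ ↥A₀ c) • (b * a)) := by rw [algebraMap_smul]
      _ = (algebraMap ℂ ↥A₀ c) • f (b * a) := f.map_smul _ _
      _ = c • f (b * a) := algebraMap_smul (↥A₀) c (f (b * a))
      _ = (c • (a • f)) b := rfl
  -- transfer to a small model
  set eC : Shrink.{0} X ≃ₗ[ℂ] X := Shrink.linearEquiv ℂ X with heCdef
  set eA : Shrink.{0} X ≃ₗ[A] X := Shrink.linearEquiv A X with heAdef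
  have heCA : ∀ z : Shrink.{0} X, eC z = eA z := by
    intro z
    rw [heCdef, heAdef, Shrink.linearEquiv_apply, Shrink.linearEquiv_apply]
  have heCsmul : ∀ (a : A) (z : Shrink.{0} X), eC (a • z) = a • eC z := by
    intro a z
    rw [heCA, heCA, map_smul]
  haveI towerShrink : IsScalarTower ℂ A (Shrink.{0} X) := by
    constructor
    intro c a z
    apply eC.injective
    calc eC ((c • a) • z) = (c • a) • eC z := heCsmul _ _
      _ = c • (a • eC z) := smul_assoc c a (eC z)
      _ = c • eC (a • z) := by rw [heCsmul]
      _ = eC (c • (a • z)) := (eC.map_smul c _).symm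
  -- even and odd parts
  set Xeven : Submodule ℂ X :=
    { carrier := {f : X | ∀ b ∈ A₁, f b = 0}
      add_mem' := fun hf hg b hb => by
        show _ + _ = (0 : U)
        rw [hf b hb, hg b hb, add_zero]
      zero_mem' := fun b _ => rfl
      smul_mem' := fun c f hf b hb => by
        show c • f b = (0 : U)
        rw [hf b hb, smul_zero] } with hXevendef
  set Xodd : Submodule ℂ X :=
    { carrier := {f : X | ∀ b ∈ A₀, f b = 0}
      add_mem' := fun hf hg b hb => by
        show _ + _ = (0 : U)
        rw [hf b hb, hg b hb, add_zero]
      zero_mem' := fun b _ => rfl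
      smul_mem' := fun c f hf b hb => by
        show c • f b = (0 : U)
        rw [hf b hb, smul_zero] } with hXodddef
  have hXevenmem : ∀ f : X, f ∈ Xeven ↔ ∀ b ∈ A₁, f b = 0 := fun _ => Iff.rfl
  have hXoddmem : ∀ f : X, f ∈ Xodd ↔ ∀ b ∈ A₀, f b = 0 := fun _ => Iff.rfl
  set V : GModuleBundle A :=
    { carrier := Shrink.{0} X
      even := Xeven.comap eC.toLinearMap
      odd := Xodd.comap eC.toLinearMap } with hVdef
  have hVevenmem : ∀ z : Shrink.{0} X, z ∈ V.even ↔ eC z ∈ Xeven := fun _ => Iff.rfl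
  have hVoddmem : ∀ z : Shrink.{0} X, z ∈ V.odd ↔ eC z ∈ Xodd := fun _ => Iff.rfl
  -- the A₀-linear projection
  set p0 : A →ₗ[↥A₀] A :=
    { toFun := fun b => π b
      map_add' := fun b b' => map_add π b b'
      map_smul' := fun s b => hπlin s b } with hp0def
  have hgraded : V.IsGraded A₀ A₁ := by
    refine ⟨⟨?_, ?_⟩, ?_, ?_, ?_, ?_⟩
    · -- disjoint
      rw [Submodule.disjoint_def]
      intro z hze hzo
      have hze' : ∀ b ∈ A₁, (eC z) b = 0 := (hVevenmem z).mp hze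
      have hzo' : ∀ b ∈ A₀, (eC z) b = 0 := (hVoddmem z).mp hzo
      apply eC.injective
      rw [map_zero]
      ext b
      have hb : (eC z) b = (eC z) (π b) + (eC z) (b - π b) := by
        rw [← map_add]
        congr 1
        abel
      rw [hb, hze' _ (hπ1 b), hzo' _ (hπ0 b), add_zero]
      rfl
    · -- codisjoint
      rw [codisjoint_iff_le_sup]
      intro z _
      rw [Submodule.mem_sup]
      refine ⟨eC.symm ((eC z).comp p0), ?_, eC.symm ((eC z) - (eC z).comp p0), ?_, ?_⟩
      · rw [hVevenmem, LinearEquiv.apply_symm_apply, hXevenmem]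
        intro b hb
        show (eC z) (p0 b) = 0
        show (eC z) (π b) = 0
        rw [hπA₁ b hb, map_zero]
      · rw [hVoddmem, LinearEquiv.apply_symm_apply, hXoddmem]
        intro b hb
        show (eC z) b - (eC z) (p0 b) = 0
        show (eC z) b - (eC z) (π b) = 0
        rw [hπA₀ b hb, sub_self]
      · rw [← map_add]
        rw [show (eC z).comp p0 + ((eC z) - (eC z).comp p0) = eC z by abel]
        exact eC.symm_apply_apply z
    · -- A₀ • even ⊆ even
      intro a ha z hz
      rw [hVevenmem] at hz ⊢
      rw [heCsmul, hXevenmem]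
      intro b hb
      show (eC z) (b * a) = 0
      exact hz _ (h10 b hb a ha)
    · -- A₀ • odd ⊆ odd
      intro a ha z hz
      rw [hVoddmem] at hz ⊢
      rw [heCsmul, hXoddmem]
      intro b hb
      show (eC z) (b * a) = 0
      exact hz _ (A₀.mul_mem hb ha)
    · -- A₁ • even ⊆ odd
      intro a ha z hz
      rw [hVevenmem] at hz
      rw [hVoddmem, heCsmul, hXoddmem]
      intro b hb
      show (eC z) (b * a) = 0
      exact hz _ (h01 b hb a ha)
    · -- A₁ • odd ⊆ even
      intro a ha z hz
      rw [hVoddmem] at hz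
      rw [hVevenmem, heCsmul, hXevenmem]
      intro b hb
      show (eC z) (b * a) = 0
      exact hz _ (h11 b hb a ha)
  -- the even part is isomorphic to U
  let ev : ↥V.even →ₗ[ℂ] U :=
    { toFun := fun z => (eC (z : Shrink.{0} X)) 1
      map_add' := fun z z' => by
        show (eC ((z : Shrink.{0} X) + (z' : Shrink.{0} X))) 1 = _
        rw [map_add]
        rfl
      map_smul' := fun c z => by
        show (eC (c • (z : Shrink.{0} X))) 1 = c • (eC (z : Shrink.{0} X)) 1
        rw [map_smul]
        rfl }
  have hinj : Function.Injective ev := by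
    rw [← LinearMap.ker_eq_bot, Submodule.eq_bot_iff]
    intro z hz
    have hz1 : (eC (z : Shrink.{0} X)) 1 = 0 := hz
    have hze : ∀ b ∈ A₁, (eC (z : Shrink.{0} X)) b = 0 := (hVevenmem _).mp z.2
    apply Subtype.ext
    show (z : Shrink.{0} X) = 0
    apply eC.injective
    rw [show eC (0 : Shrink.{0} X) = 0 from map_zero eC]
    ext b
    have hb : (eC (z : Shrink.{0} X)) b =
        (eC (z : Shrink.{0} X)) (π b) + (eC (z : Shrink.{0} X)) (b - π b) := by
      rw [← map_add]
      congr 1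
      abel
    have hb2 : (eC (z : Shrink.{0} X)) (π b) = 0 := by
      have h1 : π b = (⟨π b, hπ0 b⟩ : ↥A₀) • (1 : A) := by
        show π b = π b * 1
        rw [mul_one]
      rw [h1, map_smul, hz1, smul_zero]
    rw [hb, hb2, hze _ (hπ1 b), add_zero]
    rfl
  have hsurj : Function.Surjective ev := by
    intro u
    set fu : X :=
      { toFun := fun b => (⟨π b, hπ0 b⟩ : ↥A₀) • u
        map_add' := fun b b' => by
          have h1 : (⟨π (b + b'), hπ0 _⟩ : ↥A₀) = ⟨π b, hπ0 b⟩ + ⟨π b', hπ0 b'⟩ :=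
            Subtype.ext (map_add π b b')
          show (⟨π (b + b'), hπ0 _⟩ : ↥A₀) • u =
            (⟨π b, hπ0 b⟩ : ↥A₀) • u + (⟨π b', hπ0 b'⟩ : ↥A₀) • u
          rw [h1, add_smul]
        map_smul' := fun s b => by
          have h1 : (⟨π ((s : A) * b), hπ0 _⟩ : ↥A₀) = s * ⟨π b, hπ0 b⟩ :=
            Subtype.ext (hπlin s b)
          show (⟨π ((s : A) * b), hπ0 _⟩ : ↥A₀) • u = s • ((⟨π b, hπ0 b⟩ : ↥A₀) • u)
          rw [h1, mul_smul] } with hfudef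
    have hfueven : eC.symm fu ∈ V.even := by
      rw [hVevenmem, LinearEquiv.apply_symm_apply, hXevenmem]
      intro b hb
      show (⟨π b, hπ0 b⟩ : ↥A₀) • u = 0
      have h1 : (⟨π b, hπ0 b⟩ : ↥A₀) = 0 := Subtype.ext (hπA₁ b hb)
      rw [h1, zero_smul]
    refine ⟨⟨eC.symm fu, hfueven⟩, ?_⟩
    show (eC (eC.symm fu)) 1 = u
    rw [LinearEquiv.apply_symm_apply]
    show (⟨π 1, hπ0 1⟩ : ↥A₀) • u = u
    have h1 : (⟨π 1, hπ0 1⟩ : ↥A₀) = 1 := Subtype.ext (hπA₀ 1 A₀.one_mem)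
    rw [h1, one_smul]
  refine ⟨V, hgraded, LinearEquiv.ofBijective ev ⟨hinj, hsurj⟩, ?_⟩
  intro a v v' hvv
  show ev v' = a • ev v
  show (eC (v' : Shrink.{0} X)) 1 = a • (eC (v : Shrink.{0} X)) 1
  rw [hvv, heCsmul]
  show (eC (v : Shrink.{0} X)) (1 * (a : A)) = a • (eC (v : Shrink.{0} X)) 1
  rw [one_mul]
  have h1 : (a : A) = a • (1 : A) := by
    show (a : A) = (a : A) * 1
    rw [mul_one]
  rw [h1, map_smul]

/-- Let `A = A₀ ⊕ A₁` be a semisimple finite-dimensional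
`ℤ₂`-graded complex algebra with essential grading (every simple graded `A`-module
has nonzero even and odd parts; this is equivalent to each simple component of type
`M(n,m)` having `n, m > 0`).  Then the functor `V₀ ↦ A ⊗_{A₀} V₀` from ungraded
`A₀`-modules to graded `A`-modules is an isomorphism of categories, with inverse the
restriction functor `V ↦ V₀`.  Equivalently, the restriction functor `V ↦ V₀` is an
isomorphism of categories:
(a) it is fully faithful: every `A₀`-linear map `V₀ → W₀` between the even parts of
graded `A`-modules extends uniquely to a grading-preserving `A`-linear map `V → W`;
(b) it is bijective on objects up to isomorphism: every `A₀`-module is the even part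
of some graded `A`-module (whose underlying object is `A ⊗_{A₀} V₀`). -/
theorem stmt11 [FiniteDimensional ℂ A] (hss : IsSemisimpleRing A)
    (A₀ : Subalgebra ℂ A) (A₁ : Submodule ℂ A)
    (hcompl : IsCompl A₀.toSubmodule A₁)
    (h01 : ∀ a ∈ A₀, ∀ b ∈ A₁, a * b ∈ A₁)
    (h10 : ∀ a ∈ A₁, ∀ b ∈ A₀, a * b ∈ A₁)
    (h11 : ∀ a ∈ A₁, ∀ b ∈ A₁, a * b ∈ A₀)
    (hess : ∀ V : GModuleBundle A, V.IsGraded A₀ A₁ → V.IsSimple →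
      V.even ≠ ⊥ ∧ V.odd ≠ ⊥) :
    -- (a) full faithfulness of the restriction functor
    (∀ V W : GModuleBundle A, V.IsGraded A₀ A₁ → W.IsGraded A₀ A₁ →
      ∀ g : ↥V.even →ₗ[ℂ] ↥W.even,
        (∀ (a : ↥A₀) (v v' : ↥V.even), (v' : V.carrier) = (a : A) • (v : V.carrier) →
          (g v' : W.carrier) = (a : A) • (g v : W.carrier)) →
        ∃! f : V.carrier →ₗ[A] W.carrier,
          (∀ v ∈ V.even, f v ∈ W.even) ∧ (∀ v ∈ V.odd, f v ∈ W.odd) ∧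
          (∀ v : ↥V.even, f (v : V.carrier) = (g v : W.carrier))) ∧
    -- (b) essential surjectivity (bijectivity on objects): every `A₀`-module is the
    -- even part of a graded `A`-module
    (∀ (U : Type) [AddCommGroup U] [Module ℂ U] [Module ↥A₀ U] [IsScalarTower ℂ ↥A₀ U],
      ∃ V : GModuleBundle A, V.IsGraded A₀ A₁ ∧
        ∃ e : ↥V.even ≃ₗ[ℂ] U,
          ∀ (a : ↥A₀) (v v' : ↥V.even), (v' : V.carrier) = (a : A) • (v : V.carrier) →
            e v' = a • e v) := by
  constructor
  · intro V W hV hW g hg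
    exact partA hss A₀ A₁ hcompl h01 h11 hess V W hV hW g hg
  · intro U _ _ _ _
    exact partB A₀ A₁ hcompl h01 h10 h11 U
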